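/- For H the set of linear functions {x ↦ wᵀx : ‖w‖ ≤ 1} on ℝ^N with the square loss, the discrepancy between P̂ and Q' equals the operator norm (largest absolute eigenvalue) of the symmetric matrix M(z) = Σ_{x∈S} (P̂(x) − Q'(x)) x xᵀ, i.e., sup_{‖w‖,‖w'‖≤1} |E_P̂[((w'−w)ᵀx)²] − E_Q'[((w'−w)ᵀx)²]| = max{λ_max(M(z)), λ_max(−M(z))} (up to the fixed scaling by 4 from the bound ‖u‖ ≤ 2). -/

import Mathlib

open scoped BigOperators RealInnerProductSpace

/-- for linear hypotheses `{x ↦ wᵀx : ‖w‖ ≤ 1}` on `ℝ^N` with the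
square loss, the discrepancy between `P̂` and `Q'` equals (up to the factor `4`
arising from the substitution `u = w' − w`, `‖u‖ ≤ 2`) the spectral norm
`max{λ_max(M(z)), λ_max(−M(z))}` of `M(z) = Σ_{x∈S} (P̂(x) − Q'(x)) x xᵀ`. -/
theorem disc_square_loss_eq_spectral (N : ℕ) [NeZero N]
    (S : Finset (EuclideanSpace ℝ (Fin N)))
    (Phat Q' : EuclideanSpace ℝ (Fin N) → ℝ)
    (hPhat : (∀ x, 0 ≤ Phat x) ∧ ∑ x ∈ S, Phat x = 1)
    (hQ' : (∀ x, 0 ≤ Q' x) ∧ ∑ x ∈ S, Q' x = 1)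
    (Mz : Matrix (Fin N) (Fin N) ℝ)
    (hMz : Mz = ∑ x ∈ S, (Phat x - Q' x) • Matrix.vecMulVec (x : Fin N → ℝ) (x : Fin N → ℝ))
    (hHerm : Mz.IsHermitian) :
    (⨆ q : {w : EuclideanSpace ℝ (Fin N) // ‖w‖ ≤ 1} ×
        {w : EuclideanSpace ℝ (Fin N) // ‖w‖ ≤ 1},
      |(∑ x ∈ S, Phat x * ⟪(q.1 : EuclideanSpace ℝ (Fin N)) - (q.2 : EuclideanSpace ℝ (Fin N)), x⟫ ^ 2) -
        ∑ x ∈ S, Q' x * ⟪(q.1 : EuclideanSpace ℝ (Fin N)) - (q.2 : EuclideanSpace ℝ (Fin N)), x⟫ ^ 2|) =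
      4 * max (⨆ i, hHerm.eigenvalues i) (⨆ i, -hHerm.eigenvalues i) := by
  classical
  haveI : Nonempty (Fin N) := ⟨⟨0, Nat.pos_of_ne_zero (NeZero.ne N)⟩⟩
  set T := Matrix.toEuclideanLin Mz with hT
  set v := hHerm.eigenvectorBasis with hv
  set lam := hHerm.eigenvalues with hlam
  have hsym : (Matrix.toEuclideanLin Mz).IsSymmetric :=
    Matrix.isHermitian_iff_isSymmetric.1 hHerm
  have hTv : ∀ j, T (v j) = lam j • v j := fun j => by
    show Matrix.toEuclideanLin Mz (hHerm.eigenvectorBasis j) = hHerm.eigenvalues j • hHerm.eigenvectorBasis j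
    ext i
    simp [Matrix.toEuclideanLin_apply, hHerm.mulVec_eigenvectorBasis j]
  have keyA : ∀ u : EuclideanSpace ℝ (Fin N),
      ((∑ x ∈ S, Phat x * ⟪u, x⟫ ^ 2) - ∑ x ∈ S, Q' x * ⟪u, x⟫ ^ 2) = ⟪u, T u⟫ := by
    intro u
    rw [← Finset.sum_sub_distrib]
    simp only [← sub_mul]
    simp only [hT, Matrix.toEuclideanLin_apply, PiLp.inner_apply, RCLike.inner_apply,
      conj_trivial, PiLp.toLp_apply, WithLp.ofLp_toLp, hMz, Matrix.mulVec,
      dotProduct, Matrix.sum_apply, Matrix.smul_apply, Matrix.vecMulVec_apply,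
      smul_eq_mul, Finset.sum_mul, Finset.mul_sum, sq, Finset.sum_mul_sum]
    rw [Finset.sum_comm]
    refine Finset.sum_congr rfl fun i _ => ?_
    rw [Finset.sum_comm]
    refine Finset.sum_congr rfl fun x _ => ?_
    exact Finset.sum_congr rfl fun y _ => by ring
  have key1 : ∀ w : EuclideanSpace ℝ (Fin N), ⟪w, T w⟫ = ∑ i, lam i * ⟪v i, w⟫ ^ 2 := by
    intro w
    rw [← OrthonormalBasis.sum_inner_mul_inner v w (T w)]
    refine Finset.sum_congr rfl fun i _ => ?_
    have h : ⟪v i, T w⟫ = lam i * ⟪v i, w⟫ := by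
      rw [← hsym (v i) w, hTv i, real_inner_smul_left]
    rw [h, real_inner_comm w (v i)]; ring
  have parseval : ∀ w : EuclideanSpace ℝ (Fin N), ∑ i, ⟪v i, w⟫ ^ 2 = ‖w‖ ^ 2 := by
    intro w
    rw [← real_inner_self_eq_norm_sq, ← OrthonormalBasis.sum_inner_mul_inner v w w]
    exact Finset.sum_congr rfl fun i _ => by rw [real_inner_comm w (v i)]; ring
  set S1 := ⨆ i, lam i with hS1
  set S2 := ⨆ i, -lam i with hS2
  set L := max S1 S2 with hLdef
  have hb1 : BddAbove (Set.range lam) := Set.Finite.bddAbove (Set.finite_range _)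
  have hb2 : BddAbove (Set.range fun i => -lam i) := Set.Finite.bddAbove (Set.finite_range _)
  have hle1 : ∀ i, lam i ≤ L := fun i => (le_ciSup hb1 i).trans (le_max_left _ _)
  have hle2 : ∀ i, -lam i ≤ L := fun i => (le_ciSup hb2 i).trans (le_max_right _ _)
  have hL0 : 0 ≤ L := by
    obtain ⟨i⟩ := (inferInstance : Nonempty (Fin N))
    rcases le_total 0 (lam i) with h | h
    · exact h.trans (hle1 i)
    · exact (neg_nonneg.2 h).trans (hle2 i)
  have hGbound : ∀ w : EuclideanSpace ℝ (Fin N), ‖w‖ ≤ 2 → |⟪w, T w⟫| ≤ 4 * L := by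
    intro w hw
    have hn : ‖w‖ ^ 2 ≤ 4 := by nlinarith [norm_nonneg w]
    have h1 : ⟪w, T w⟫ ≤ 4 * L := by
      rw [key1 w]
      calc ∑ i, lam i * ⟪v i, w⟫ ^ 2 ≤ ∑ i, L * ⟪v i, w⟫ ^ 2 :=
            Finset.sum_le_sum fun i _ => mul_le_mul_of_nonneg_right (hle1 i) (sq_nonneg _)
        _ = L * ‖w‖ ^ 2 := by rw [← Finset.mul_sum, parseval]
        _ ≤ L * 4 := mul_le_mul_of_nonneg_left hn hL0
        _ = 4 * L := mul_comm _ _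
    have h2 : -⟪w, T w⟫ ≤ 4 * L := by
      rw [key1 w, ← Finset.sum_neg_distrib]
      calc ∑ i, -(lam i * ⟪v i, w⟫ ^ 2) ≤ ∑ i, L * ⟪v i, w⟫ ^ 2 :=
            Finset.sum_le_sum fun i _ => by
              rw [neg_mul_eq_neg_mul]
              exact mul_le_mul_of_nonneg_right (hle2 i) (sq_nonneg _)
        _ = L * ‖w‖ ^ 2 := by rw [← Finset.mul_sum, parseval]
        _ ≤ L * 4 := mul_le_mul_of_nonneg_left hn hL0
        _ = 4 * L := mul_comm _ _
    exact abs_le.2 ⟨by linarith, h1⟩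
  haveI : Nonempty {w : EuclideanSpace ℝ (Fin N) // ‖w‖ ≤ 1} :=
    ⟨⟨0, by simp⟩⟩
  have hterm : ∀ q : {w : EuclideanSpace ℝ (Fin N) // ‖w‖ ≤ 1} ×
      {w : EuclideanSpace ℝ (Fin N) // ‖w‖ ≤ 1},
      |(∑ x ∈ S, Phat x * ⟪(q.1 : EuclideanSpace ℝ (Fin N)) - (q.2 : EuclideanSpace ℝ (Fin N)), x⟫ ^ 2) -
        ∑ x ∈ S, Q' x * ⟪(q.1 : EuclideanSpace ℝ (Fin N)) - (q.2 : EuclideanSpace ℝ (Fin N)), x⟫ ^ 2| ≤ 4 * L := by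
    intro q
    rw [keyA]
    refine hGbound _ ((norm_sub_le _ _).trans ?_)
    linarith [q.1.2, q.2.2]
  have hbdd : BddAbove (Set.range fun q : {w : EuclideanSpace ℝ (Fin N) // ‖w‖ ≤ 1} ×
      {w : EuclideanSpace ℝ (Fin N) // ‖w‖ ≤ 1} =>
      |(∑ x ∈ S, Phat x * ⟪(q.1 : EuclideanSpace ℝ (Fin N)) - (q.2 : EuclideanSpace ℝ (Fin N)), x⟫ ^ 2) -
        ∑ x ∈ S, Q' x * ⟪(q.1 : EuclideanSpace ℝ (Fin N)) - (q.2 : EuclideanSpace ℝ (Fin N)), x⟫ ^ 2|) :=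
    ⟨4 * L, by rintro _ ⟨q, rfl⟩; exact hterm q⟩
  have habs : ∀ i : Fin N, 4 * |lam i| ≤
      ⨆ q : {w : EuclideanSpace ℝ (Fin N) // ‖w‖ ≤ 1} ×
        {w : EuclideanSpace ℝ (Fin N) // ‖w‖ ≤ 1},
      |(∑ x ∈ S, Phat x * ⟪(q.1 : EuclideanSpace ℝ (Fin N)) - (q.2 : EuclideanSpace ℝ (Fin N)), x⟫ ^ 2) -
        ∑ x ∈ S, Q' x * ⟪(q.1 : EuclideanSpace ℝ (Fin N)) - (q.2 : EuclideanSpace ℝ (Fin N)), x⟫ ^ 2| := by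
    intro i
    have hv1 : ‖(v i : EuclideanSpace ℝ (Fin N))‖ = 1 := v.orthonormal.1 i
    have hq2 : ‖(-(v i : EuclideanSpace ℝ (Fin N)))‖ ≤ 1 := by rw [norm_neg, hv1]
    set q : {w : EuclideanSpace ℝ (Fin N) // ‖w‖ ≤ 1} ×
        {w : EuclideanSpace ℝ (Fin N) // ‖w‖ ≤ 1} :=
      (⟨v i, le_of_eq hv1⟩, ⟨-(v i), hq2⟩) with hq
    have hdiff : ((q.1 : EuclideanSpace ℝ (Fin N)) - (q.2 : EuclideanSpace ℝ (Fin N)))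
        = (2 : ℝ) • (v i : EuclideanSpace ℝ (Fin N)) := by
      rw [hq]; simp [two_smul, sub_neg_eq_add]
    have hval : ⟪(q.1 : EuclideanSpace ℝ (Fin N)) - (q.2 : EuclideanSpace ℝ (Fin N)),
        T ((q.1 : EuclideanSpace ℝ (Fin N)) - (q.2 : EuclideanSpace ℝ (Fin N)))⟫ = 4 * lam i := by
      rw [hdiff, map_smul, hTv i, real_inner_smul_left, real_inner_smul_right,
        real_inner_smul_right, real_inner_self_eq_norm_sq, hv1]
      ring
    have hgq : |(∑ x ∈ S, Phat x * ⟪(q.1 : EuclideanSpace ℝ (Fin N)) - (q.2 : EuclideanSpace ℝ (Fin N)), x⟫ ^ 2) -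
        ∑ x ∈ S, Q' x * ⟪(q.1 : EuclideanSpace ℝ (Fin N)) - (q.2 : EuclideanSpace ℝ (Fin N)), x⟫ ^ 2|
        = 4 * |lam i| := by
      rw [keyA, hval, abs_mul, abs_of_nonneg (by norm_num : (0:ℝ) ≤ 4)]
    exact hgq ▸ le_ciSup hbdd q
  refine le_antisymm (ciSup_le hterm) ?_
  obtain ⟨i1, hi1⟩ := Finite.exists_max lam
  obtain ⟨i2, hi2⟩ := Finite.exists_max fun i => -lam i
  have hS1le : S1 ≤ |lam i1| := (ciSup_le hi1).trans (le_abs_self _)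
  have hS2le : S2 ≤ |lam i2| := (ciSup_le hi2).trans (neg_le_abs _)
  rcases le_total S1 S2 with h | h
  · calc 4 * (S1 ⊔ S2) = 4 * S2 := by rw [max_eq_right h]
      _ ≤ 4 * |lam i2| := by linarith
      _ ≤ _ := habs i2
  · calc 4 * (S1 ⊔ S2) = 4 * S1 := by rw [max_eq_left h]
      _ ≤ 4 * |lam i1| := by linarith
      _ ≤ _ := habs i1
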